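/- For all n > 24, s > 0, L > 9, and m = L n, one has P{ ∑_{i=1}^n v_i·k_i(x) ≤ L n ‖v‖ ‖p‖ √(1 + (3 + 6s)/√L + 5s²/L) + 1 } ≥ 1 − (10/9) e^{−s²/4}, where x ∈ U^m is drawn from the product measure; in particular, since the average search time AST(v,x) is at most ∑_{i=1}^n v_i·k_i(x), the same probabilistic upper bound holds for AST(v,x). -/

import Mathlib

/-- Number of keys of the sequence `x` (counted with multiplicity) hashed into slot `i`. -/
def kcount {U : Type*} [Fintype U] {n m : ℕ} (h : U → Fin n) (x : Fin m → U) (i : Fin n) : ℕ :=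
  (Finset.univ.filter (fun j => h (x j) = i)).card

/-- Probability of a set `S` of key sequences, under the product measure induced by
the probability mass function `q` on the key space `U`. -/
noncomputable def Pr {U : Type*} [Fintype U] {m : ℕ} (q : U → ℝ) (S : Set (Fin m → U)) : ℝ :=
  ∑ x : Fin m → U, S.indicator (fun y => ∏ j, q (y j)) x

/-- The empirical collision probability `∑ i, k_i(x)(k_i(x) − 1) / (m(m−1))`
of a sequence `x` of `m` keys. -/
noncomputable def collEst {U : Type*} [Fintype U] {n m : ℕ} (h : U → Fin n)
    (x : Fin m → U) : ℝ :=
  ∑ i : Fin n, (kcount h x i : ℝ) * ((kcount h x i : ℝ) - 1) / ((m : ℝ) * ((m : ℝ) - 1))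



private lemma prSumOne {U : Type*} [Fintype U] {m : ℕ} (q : U → ℝ) (hq1 : ∑ u, q u = 1) :
    ∑ x : Fin m → U, ∏ j, q (x j) = 1 := by
  classical
  have h := Finset.prod_univ_sum (fun _ : Fin m => (Finset.univ : Finset U)) (fun _ u => q u)
  rw [Fintype.piFinset_univ] at h
  rw [← h, Finset.prod_const, hq1, one_pow]

private lemma prPowEq {U : Type*} [Fintype U] {m : ℕ} (f : U → ℝ) :
    ∑ x : Fin m → U, ∏ j, f (x j) = (∑ u, f u) ^ m := by
  classical
  have h := Finset.prod_univ_sum (fun _ : Fin m => (Finset.univ : Finset U)) (fun _ u => f u)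
  rw [Fintype.piFinset_univ] at h
  rw [← h, Finset.prod_const, Finset.card_univ, Fintype.card_fin]

private lemma prCompl {U : Type*} [Fintype U] {m : ℕ} (q : U → ℝ) (hq1 : ∑ u, q u = 1)
    (S : Set (Fin m → U)) : Pr q S = 1 - Pr q Sᶜ := by
  classical
  unfold Pr
  have key : ∀ x : Fin m → U, S.indicator (fun y => ∏ j, q (y j)) x
      = (∏ j, q (x j)) - Sᶜ.indicator (fun y => ∏ j, q (y j)) x := by
    intro x
    by_cases hx : x ∈ S
    · rw [Set.indicator_of_mem hx, Set.indicator_of_notMem (by simpa using hx)]; ring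
    · rw [Set.indicator_of_notMem hx, Set.indicator_of_mem (by simpa using hx)]; ring
  calc ∑ x : Fin m → U, S.indicator (fun y => ∏ j, q (y j)) x
      = ∑ x : Fin m → U, ((∏ j, q (x j)) - Sᶜ.indicator (fun y => ∏ j, q (y j)) x) :=
        Finset.sum_congr rfl (fun x _ => key x)
    _ = (∑ x : Fin m → U, ∏ j, q (x j)) - ∑ x : Fin m → U, Sᶜ.indicator (fun y => ∏ j, q (y j)) x :=
        Finset.sum_sub_distrib _ _
    _ = 1 - ∑ x : Fin m → U, Sᶜ.indicator (fun y => ∏ j, q (y j)) x := by rw [prSumOne q hq1]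

private lemma prMono {U : Type*} [Fintype U] {m : ℕ} (q : U → ℝ) (hq0 : ∀ u, 0 ≤ q u)
    {S T : Set (Fin m → U)} (hST : S ⊆ T) : Pr q S ≤ Pr q T :=
  Finset.sum_le_sum fun x _ =>
    Set.indicator_le_indicator_of_subset hST
      (fun y => Finset.prod_nonneg fun j _ => hq0 (y j)) x

private lemma prChernoff {U : Type*} [Fintype U] {m : ℕ} (q : U → ℝ) (hq0 : ∀ u, 0 ≤ q u)
    (W : U → ℝ) (lam B : ℝ) (hlam : 0 ≤ lam) :
    Pr q {x : Fin m → U | B < ∑ j, W (x j)} ≤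
      Real.exp (-(lam * B)) * (∑ u, q u * Real.exp (lam * W u)) ^ m := by
  classical
  unfold Pr
  have hperx : ∀ x : Fin m → U,
      Real.exp (-(lam * B)) * ∏ j, (q (x j) * Real.exp (lam * W (x j)))
        = Real.exp (lam * ((∑ j, W (x j)) - B)) * ∏ j, q (x j) := by
    intro x
    rw [Finset.prod_mul_distrib]
    have h1 : ∏ j, Real.exp (lam * W (x j)) = Real.exp (lam * ∑ j, W (x j)) := by
      rw [Finset.mul_sum, Real.exp_sum]
    rw [h1]
    have h2 : Real.exp (lam * ((∑ j, W (x j)) - B))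
        = Real.exp (-(lam * B)) * Real.exp (lam * ∑ j, W (x j)) := by
      rw [← Real.exp_add]; ring_nf
    rw [h2]; ring
  calc ∑ x : Fin m → U, ({x : Fin m → U | B < ∑ j, W (x j)}).indicator (fun y => ∏ j, q (y j)) x
      ≤ ∑ x : Fin m → U, Real.exp (-(lam * B)) * ∏ j, (q (x j) * Real.exp (lam * W (x j))) := by
        apply Finset.sum_le_sum
        intro x _
        rw [hperx x]
        by_cases hx : x ∈ {x : Fin m → U | B < ∑ j, W (x j)}
        · rw [Set.indicator_of_mem hx]
          have hBX : B < ∑ j, W (x j) := hx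
          have h1 : (1:ℝ) ≤ Real.exp (lam * ((∑ j, W (x j)) - B)) := by
            rw [← Real.exp_zero]
            exact Real.exp_le_exp.2 (by nlinarith)
          have h2 : 0 ≤ ∏ j, q (x j) := Finset.prod_nonneg fun j _ => hq0 (x j)
          nlinarith
        · rw [Set.indicator_of_notMem hx]
          have h2 : 0 ≤ ∏ j, q (x j) := Finset.prod_nonneg fun j _ => hq0 (x j)
          positivity
    _ = Real.exp (-(lam * B)) * ∑ x : Fin m → U, ∏ j, (q (x j) * Real.exp (lam * W (x j))) := by
        rw [Finset.mul_sum]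
    _ = Real.exp (-(lam * B)) * (∑ u, q u * Real.exp (lam * W u)) ^ m := by
        rw [prPowEq (fun u => q u * Real.exp (lam * W u))]

private lemma sqLeOfSq {t c : ℝ} (h1 : t ^ 2 ≤ c ^ 2) (h0 : 0 ≤ t) (hc : 0 ≤ c) : t ≤ c := by
  nlinarith

private lemma sqrtOneLt {R d : ℝ} (hR0 : 0 ≤ R) (hR2 : R ^ 2 = 1 + d) (hd : 0 < d) : 1 < R := by
  nlinarith

private lemma expoCase1 {L s r R mb : ℝ} (hs : 0 < s) (hsL : 0 < Real.sqrt L)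
    (hsL2 : Real.sqrt L ^ 2 = L) (hr0 : 0 < r) (hr1 : r ≤ 1)
    (hd : 6 * s / Real.sqrt L ≤ r ^ 2 + 2 * r) (hRr : R = r + 1) (hmb : L * R ≤ mb) :
    s ^ 2 / 4 ≤ mb * (r * R - (Real.exp r - 1)) := by
  have hL0 : 0 < L := by rw [← hsL2]; positivity
  have hexp : Real.exp r ≤ 1 + r + 3 / 4 * r ^ 2 := by
    have hbd := Real.exp_bound (x := r) (by rw [abs_of_pos hr0]; exact hr1) (n := 2) (by norm_num)
    have hs2 : ∑ i ∈ Finset.range 2, r ^ i / (Nat.factorial i : ℝ) = 1 + r := by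
      norm_num [Finset.sum_range_succ]
    rw [hs2, abs_of_pos hr0] at hbd
    have h2 := (abs_le.1 hbd).2
    norm_num at h2 ⊢
    nlinarith [h2]
  have hd3 : r ^ 2 + 2 * r ≤ 3 * r := by nlinarith
  have hrs : 2 * s ≤ r * Real.sqrt L := by
    rw [div_le_iff₀ hsL] at hd
    nlinarith [hsL.le]
  have hLr : 4 * s ^ 2 ≤ L * r ^ 2 := by
    have key : 0 ≤ (r * Real.sqrt L - 2 * s) * (r * Real.sqrt L + 2 * s) := by
      apply mul_nonneg (by linarith)
      nlinarith [mul_nonneg hr0.le hsL.le]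
    nlinarith [key, hsL2]
  have hmbL : L ≤ mb := by nlinarith
  have h4 : r ^ 2 / 4 ≤ r * R - (Real.exp r - 1) := by
    rw [hRr]; nlinarith [hexp]
  calc s ^ 2 / 4 ≤ L * r ^ 2 / 16 := by nlinarith
  _ ≤ mb * (r ^ 2 / 4) := by nlinarith [sq_nonneg r]
  _ ≤ mb * (r * R - (Real.exp r - 1)) :=
    mul_le_mul_of_nonneg_left h4 (by linarith)

private lemma expoCase2 {L s r R mb : ℝ} (hs : 0 < s) (hL0 : 0 < L) (hr1 : 1 < r)
    (hd : 5 * s ^ 2 ≤ L * (r ^ 2 + 2 * r)) (hRr : R = r + 1) (hmb : L * R ≤ mb) :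
    s ^ 2 / 4 ≤ mb * (1 * R - (Real.exp 1 - 1)) := by
  have he : Real.exp 1 < 2.7182818286 := Real.exp_one_lt_d9
  have he2 : (2:ℝ) < Real.exp 1 := by
    have := Real.exp_one_gt_d9
    norm_num at this ⊢
    linarith
  have h28 : (0.28 : ℝ) < 3 - Real.exp 1 := by norm_num at he ⊢; linarith
  have hgq : (3 - Real.exp 1) * r ≤ 1 * R - (Real.exp 1 - 1) := by
    rw [hRr]
    nlinarith [mul_nonneg (by linarith : (0:ℝ) ≤ Real.exp 1 - 2)
      (by linarith : (0:ℝ) ≤ r - 1)]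
  have hr0 : (0:ℝ) < r := by linarith
  have hmbL : L ≤ mb := by nlinarith
  have hstep : (r ^ 2 + 2 * r) / 2 ≤ (1 + r) * r := by nlinarith [sq_nonneg r]
  have hkey := mul_le_mul_of_nonneg_left hstep
    (mul_nonneg (by linarith : (0:ℝ) ≤ 3 - Real.exp 1) hL0.le)
  calc s ^ 2 / 4 ≤ (3 - Real.exp 1) / 2 * (5 * s ^ 2) := by nlinarith [sq_nonneg s]
  _ ≤ (3 - Real.exp 1) / 2 * (L * (r ^ 2 + 2 * r)) := by nlinarith
  _ ≤ (L * R) * ((3 - Real.exp 1) * r) := by rw [hRr]; nlinarith [hkey]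
  _ ≤ mb * ((3 - Real.exp 1) * r) :=
      mul_le_mul_of_nonneg_right hmb (mul_nonneg (by linarith) hr0.le)
  _ ≤ mb * (1 * R - (Real.exp 1 - 1)) :=
      mul_le_mul_of_nonneg_left hgq (by linarith)

private lemma expoFinal {mb R ν k c s M : ℝ} (hk : 0 ≤ k)
    (hg : s ^ 2 / 4 ≤ mb * (ν * R - (c - 1))) (hM : M = mb * (c - 1)) :
    -(ν * mb * R + k) + M ≤ -s ^ 2 / 4 := by
  rw [hM]; nlinarith

set_option maxHeartbeats 1000000 in
/-- Corollary 8 of the paper: For all `n > 24`, `s > 0`, `L > 9`, and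
`m = L n`, with probability at least `1 − (10/9) e^(−s²/4)` over the inserted key
sequence `x`, one has `∑ i, v i · k_i(x) ≤ L n ‖v‖ ‖p‖ √(1 + (3+6s)/√L + 5s²/L) + 1`;
in particular the same probabilistic upper bound holds for any `AST` (average search
time) function satisfying `AST x ≤ ∑ i, v i · k_i(x)`. -/
theorem average_search_time_bound
    {U : Type*} [Fintype U] [Nonempty U]
    (n : ℕ) (hn : 24 < n)
    (q : U → ℝ) (hq0 : ∀ u, 0 ≤ q u) (hq1 : ∑ u, q u = 1)
    (h : U → Fin n)
    (p : Fin n → ℝ)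
    (hp : ∀ i, p i = ∑ u ∈ Finset.univ.filter (fun u => h u = i), q u)
    (v : Fin n → ℝ) (hv0 : ∀ i, 0 ≤ v i) (hv1 : ∀ i, v i ≤ 1)
    (hvsum : ∑ i, v i = 1)
    (m : ℕ) (hm : 2 ≤ m)
    (s L : ℝ) (hs : 0 < s) (hL : 9 < L) (hmn : (m : ℝ) = L * n)
    (AST : (Fin m → U) → ℝ)
    (hAST : ∀ x : Fin m → U, AST x ≤ ∑ i : Fin n, v i * (kcount h x i : ℝ)) :
    (1 - (10 / 9) * Real.exp (-s ^ 2 / 4)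
      ≤ Pr q {x : Fin m → U |
          ∑ i : Fin n, v i * (kcount h x i : ℝ)
            ≤ L * n * Real.sqrt (∑ i : Fin n, v i ^ 2)
                * Real.sqrt (∑ i : Fin n, p i ^ 2)
                * Real.sqrt (1 + (3 + 6 * s) / Real.sqrt L + 5 * s ^ 2 / L) + 1})
    ∧ (1 - (10 / 9) * Real.exp (-s ^ 2 / 4)
      ≤ Pr q {x : Fin m → U |
          AST x
            ≤ L * n * Real.sqrt (∑ i : Fin n, v i ^ 2)
                * Real.sqrt (∑ i : Fin n, p i ^ 2)
                * Real.sqrt (1 + (3 + 6 * s) / Real.sqrt L + 5 * s ^ 2 / L) + 1}) := by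
  classical
  rw [← hmn]
  have hL0 : (0:ℝ) < L := by linarith
  have hsL : 0 < Real.sqrt L := Real.sqrt_pos.2 hL0
  have hsL2 : Real.sqrt L ^ 2 = L := Real.sq_sqrt hL0.le
  have hn0 : (0:ℝ) < n := by
    have : 0 < n := by omega
    exact_mod_cast this
  have hm0 : (0:ℝ) < m := by
    have : 0 < m := by omega
    exact_mod_cast this
  have hδ0 : 0 < (3 + 6 * s) / Real.sqrt L + 5 * s ^ 2 / L := by
    have h1 : 0 < (3 + 6 * s) / Real.sqrt L := div_pos (by linarith) hsL
    have h2 : 0 < 5 * s ^ 2 / L := div_pos (by nlinarith [pow_pos hs 2]) hL0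
    linarith
  set a := Real.sqrt (∑ i : Fin n, v i ^ 2) with ha_def
  set b := Real.sqrt (∑ i : Fin n, p i ^ 2) with hb_def
  set R := Real.sqrt (1 + (3 + 6 * s) / Real.sqrt L + 5 * s ^ 2 / L) with hR_def
  set E := Real.exp (-s ^ 2 / 4) with hE_def
  set B := (m : ℝ) * a * b * R + 1 with hB_def
  have hR2 : R ^ 2 = 1 + (3 + 6 * s) / Real.sqrt L + 5 * s ^ 2 / L := by
    rw [hR_def]
    exact Real.sq_sqrt (by linarith : (0:ℝ) ≤ 1 + (3 + 6 * s) / Real.sqrt L + 5 * s ^ 2 / L)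
  have hR0 : 0 ≤ R := Real.sqrt_nonneg _
  have hR2' : R ^ 2 = 1 + ((3 + 6 * s) / Real.sqrt L + 5 * s ^ 2 / L) := by rw [hR2]; ring
  have hR1' : 1 < R := sqrtOneLt hR0 hR2' hδ0
  have hR1 : 1 ≤ R := hR1'.le
  set r := R - 1 with hr_def
  have hRr : R = r + 1 := by rw [hr_def]; ring
  have hr0 : 0 < r := by rw [hr_def]; linarith
  have hδr : r ^ 2 + 2 * r = (3 + 6 * s) / Real.sqrt L + 5 * s ^ 2 / L := by
    have h' : (r + 1) ^ 2 = 1 + (3 + 6 * s) / Real.sqrt L + 5 * s ^ 2 / L := by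
      rw [← hRr]; exact hR2
    linear_combination h'
  have hδ1 : 6 * s / Real.sqrt L ≤ r ^ 2 + 2 * r := by
    rw [hδr]
    have h1 : 6 * s / Real.sqrt L ≤ (3 + 6 * s) / Real.sqrt L :=
      (div_le_div_iff_of_pos_right hsL).2 (by linarith)
    have h2 : 0 ≤ 5 * s ^ 2 / L := by positivity
    linarith
  have hδ2 : 5 * s ^ 2 ≤ L * (r ^ 2 + 2 * r) := by
    rw [hδr]
    have h1 : 0 ≤ (3 + 6 * s) / Real.sqrt L := div_nonneg (by linarith) hsL.le
    have h2 : L * (5 * s ^ 2 / L) = 5 * s ^ 2 := by field_simp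
    nlinarith
  -- facts about v
  have hv_le_a : ∀ i, v i ≤ a := by
    intro i
    have h1 : v i ^ 2 ≤ ∑ i : Fin n, v i ^ 2 :=
      Finset.single_le_sum (f := fun i => v i ^ 2) (fun i _ => sq_nonneg _) (Finset.mem_univ i)
    calc v i = Real.sqrt (v i ^ 2) := (Real.sqrt_sq (hv0 i)).symm
    _ ≤ a := Real.sqrt_le_sqrt h1
  have hcs_v := Finset.sum_mul_sq_le_sq_mul_sq Finset.univ v (fun _ => (1:ℝ))
  have hv2pos : 0 < ∑ i : Fin n, v i ^ 2 := by
    simp only [mul_one, one_pow, Finset.sum_const, Finset.card_univ, Fintype.card_fin,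
      nsmul_eq_mul] at hcs_v
    rw [hvsum] at hcs_v
    nlinarith
  have ha0 : 0 < a := Real.sqrt_pos.2 hv2pos
  have ha2 : a ^ 2 = ∑ i : Fin n, v i ^ 2 := by
    rw [ha_def]; exact Real.sq_sqrt hv2pos.le
  have ha1 : a ≤ 1 := by
    rw [ha_def]
    apply Real.sqrt_le_one.2
    calc ∑ i : Fin n, v i ^ 2 ≤ ∑ i : Fin n, v i :=
      Finset.sum_le_sum fun i _ => by nlinarith [hv0 i, hv1 i]
    _ = 1 := hvsum
  -- facts about p
  have hp0 : ∀ i, 0 ≤ p i := fun i => by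
    rw [hp i]; exact Finset.sum_nonneg fun u _ => hq0 u
  have hpsum : ∑ i, p i = 1 := by
    calc ∑ i, p i = ∑ i, ∑ u ∈ Finset.univ.filter (fun u => h u = i), q u :=
      Finset.sum_congr rfl fun i _ => hp i
    _ = ∑ u, q u := Finset.sum_fiberwise Finset.univ h q
    _ = 1 := hq1
  have hcs_p := Finset.sum_mul_sq_le_sq_mul_sq Finset.univ p (fun _ => (1:ℝ))
  have hp2pos : (1:ℝ) ≤ (∑ i : Fin n, p i ^ 2) * n := by
    simp only [mul_one, one_pow, Finset.sum_const, Finset.card_univ, Fintype.card_fin,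
      nsmul_eq_mul] at hcs_p
    rw [hpsum] at hcs_p
    nlinarith
  have hb0 : 0 < b := by
    rw [hb_def]
    exact Real.sqrt_pos.2 (by nlinarith)
  have hb2 : b ^ 2 = ∑ i : Fin n, p i ^ 2 := by
    rw [hb_def]
    exact Real.sq_sqrt (Finset.sum_nonneg fun i _ => sq_nonneg _)
  have hmb2 : L ≤ (m:ℝ) * b ^ 2 := by
    rw [hmn, hb2]
    nlinarith
  -- the weight function
  set W : U → ℝ := fun u => v (h u) with hW_def
  have hW0 : ∀ u, 0 ≤ W u := fun u => hv0 _
  have hWa : ∀ u, W u ≤ a := fun u => hv_le_a _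
  -- key identity
  have hX : ∀ x : Fin m → U, ∑ i : Fin n, v i * (kcount h x i : ℝ) = ∑ j, W (x j) := by
    intro x
    rw [← Finset.sum_fiberwise Finset.univ (fun j => h (x j)) (fun j => W (x j))]
    apply Finset.sum_congr rfl
    intro i _
    have hc : ∀ j ∈ Finset.univ.filter (fun j => h (x j) = i), W (x j) = v i := by
      intro j hj
      have hji := (Finset.mem_filter.1 hj).2
      simp only [hW_def, hji]
    rw [Finset.sum_congr rfl hc, Finset.sum_const, nsmul_eq_mul]
    simp [kcount, mul_comm]
  -- mean bound
  have hmu : ∑ u, q u * W u = ∑ i : Fin n, p i * v i := by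
    rw [← Finset.sum_fiberwise Finset.univ h (fun u => q u * W u)]
    apply Finset.sum_congr rfl
    intro i _
    have hc : ∀ u ∈ Finset.univ.filter (fun u => h u = i), q u * W u = q u * v i := by
      intro u hu
      have hui := (Finset.mem_filter.1 hu).2
      simp only [hW_def, hui]
    rw [Finset.sum_congr rfl hc, ← Finset.sum_mul, ← hp i, mul_comm]
  have hmu_ab : ∑ u, q u * W u ≤ a * b := by
    rw [hmu]
    have hcs := Finset.sum_mul_sq_le_sq_mul_sq Finset.univ p v
    have h0 : 0 ≤ ∑ i : Fin n, p i * v i :=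
      Finset.sum_nonneg fun i _ => mul_nonneg (hp0 i) (hv0 i)
    have h1 : (∑ i : Fin n, p i * v i) ^ 2 ≤ (a * b) ^ 2 := by
      rw [mul_pow, ha2, hb2]
      calc (∑ i : Fin n, p i * v i) ^ 2 ≤ (∑ i : Fin n, p i ^ 2) * ∑ i : Fin n, v i ^ 2 := hcs
      _ = (∑ i : Fin n, v i ^ 2) * ∑ i : Fin n, p i ^ 2 := by ring
    exact sqLeOfSq h1 h0 (mul_nonneg ha0.le hb0.le)
  -- main bound for the first set
  have main : 1 - 10 / 9 * E ≤ Pr q {x : Fin m → U | ∑ i : Fin n, v i * (kcount h x i : ℝ) ≤ B} := by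
    have hE0 : 0 < E := Real.exp_pos _
    by_cases hdet : 1 ≤ b * R
    · -- deterministic case: the set is everything
      have hset : {x : Fin m → U | ∑ i : Fin n, v i * (kcount h x i : ℝ) ≤ B} = Set.univ := by
        apply Set.eq_univ_of_forall
        intro x
        show ∑ i : Fin n, v i * (kcount h x i : ℝ) ≤ B
        have h1 : ∑ j, W (x j) ≤ ∑ j : Fin m, a := Finset.sum_le_sum fun j _ => hWa (x j)
        have h2 : ∑ j : Fin m, a = (m:ℝ) * a := by
          rw [Finset.sum_const, Finset.card_univ, Fintype.card_fin, nsmul_eq_mul]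
        have h3 : (m:ℝ) * a * 1 ≤ (m:ℝ) * a * (b * R) :=
          mul_le_mul_of_nonneg_left hdet (mul_nonneg hm0.le ha0.le)
        rw [hX x, hB_def]
        linarith [h1, h2, h3]
      rw [hset]
      have huniv : Pr q (Set.univ : Set (Fin m → U)) = 1 := by
        unfold Pr
        simp only [Set.indicator_univ]
        exact prSumOne q hq1
      rw [huniv]
      linarith
    · push_neg at hdet
      have hmbR : L * R ≤ (m:ℝ) * b := by
        have h1 : L * (b * R) ≤ L * 1 := mul_le_mul_of_nonneg_left hdet.le hL0.le
        have h3 : (L * R) * b ≤ ((m:ℝ) * b) * b := by linarith [h1, hmb2]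
        exact le_of_mul_le_mul_right h3 hb0
      have hmbL : L ≤ (m:ℝ) * b := by
        have h5 := mul_le_mul_of_nonneg_left hR1 hL0.le
        linarith [hmbR, h5]
      -- choice of nu
      set ν := min r 1 with hν_def
      have hν0 : 0 < ν := lt_min hr0 one_pos
      -- the exponent inequality
      have hg : s ^ 2 / 4 ≤ ((m:ℝ) * b) * (ν * R - (Real.exp ν - 1)) := by
        rcases le_or_gt r 1 with hr1 | hr1
        · have hνr : ν = r := by rw [hν_def]; exact min_eq_left hr1
          rw [hνr]
          exact expoCase1 hs hsL hsL2 hr0 hr1 hδ1 hRr hmbR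
        · have hνr : ν = 1 := by rw [hν_def]; exact min_eq_right hr1.le
          rw [hνr]
          exact expoCase2 hs hL0 hr1 hδ2 hRr hmbR
      -- Chernoff bound
      have hch := prChernoff (m := m) q hq0 W (ν / a) B (le_of_lt (div_pos hν0 ha0))
      have hexp1 : (1:ℝ) ≤ Real.exp ν := by
        rw [← Real.exp_zero]
        exact Real.exp_le_exp.2 hν0.le
      -- per-key mgf bound
      have hkey : ∑ u, q u * Real.exp ((ν / a) * W u) ≤ Real.exp (b * (Real.exp ν - 1)) := by
        have hstep : ∀ u, Real.exp ((ν / a) * W u) ≤ 1 + W u / a * (Real.exp ν - 1) := by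
          intro u
          have hθ0 : 0 ≤ W u / a := div_nonneg (hW0 u) ha0.le
          have hθ1 : W u / a ≤ 1 := (div_le_one ha0).2 (hWa u)
          have hc := convexOn_exp.2 (Set.mem_univ ν) (Set.mem_univ (0:ℝ)) hθ0
            (show (0:ℝ) ≤ 1 - W u / a by linarith)
            (show W u / a + (1 - W u / a) = 1 by ring)
          simp only [smul_eq_mul, mul_zero, add_zero, Real.exp_zero] at hc
          have harg : (ν / a) * W u = W u / a * ν := by ring
          rw [harg]
          calc Real.exp (W u / a * ν) ≤ W u / a * Real.exp ν + (1 - W u / a) * 1 := hc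
          _ = 1 + W u / a * (Real.exp ν - 1) := by ring
        have hmono : ∑ u, q u * Real.exp ((ν / a) * W u)
            ≤ ∑ u, q u * (1 + W u / a * (Real.exp ν - 1)) :=
          Finset.sum_le_sum fun u _ => mul_le_mul_of_nonneg_left (hstep u) (hq0 u)
        have hsplit : ∑ u, q u * (1 + W u / a * (Real.exp ν - 1))
            = 1 + (∑ u, q u * W u) * ((Real.exp ν - 1) / a) := by
          have hterm : ∀ u, q u * (1 + W u / a * (Real.exp ν - 1))
              = q u + (q u * W u) * ((Real.exp ν - 1) / a) := by
            intro u; ring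
          rw [Finset.sum_congr rfl fun u _ => hterm u, Finset.sum_add_distrib, hq1,
            ← Finset.sum_mul]
        have hfin : (∑ u, q u * W u) * ((Real.exp ν - 1) / a) ≤ b * (Real.exp ν - 1) := by
          have h1 : (∑ u, q u * W u) * ((Real.exp ν - 1) / a)
              ≤ (a * b) * ((Real.exp ν - 1) / a) :=
            mul_le_mul_of_nonneg_right hmu_ab (div_nonneg (by linarith) ha0.le)
          have h2 : (a * b) * ((Real.exp ν - 1) / a) = b * (Real.exp ν - 1) := by
            field_simp
          linarith [h2 ▸ h1]
        calc ∑ u, q u * Real.exp ((ν / a) * W u)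
            ≤ 1 + (∑ u, q u * W u) * ((Real.exp ν - 1) / a) := by rw [← hsplit]; exact hmono
        _ ≤ 1 + b * (Real.exp ν - 1) := by linarith
        _ ≤ Real.exp (b * (Real.exp ν - 1)) := by
            linarith [Real.add_one_le_exp (b * (Real.exp ν - 1))]
      -- combine
      have hsum0 : 0 ≤ ∑ u, q u * Real.exp ((ν / a) * W u) :=
        Finset.sum_nonneg fun u _ => mul_nonneg (hq0 u) (Real.exp_nonneg _)
      have htail : Pr q {x : Fin m → U | B < ∑ j, W (x j)} ≤ E := by
        calc Pr q {x : Fin m → U | B < ∑ j, W (x j)}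
            ≤ Real.exp (-((ν / a) * B)) * (∑ u, q u * Real.exp ((ν / a) * W u)) ^ m := hch
        _ ≤ Real.exp (-((ν / a) * B)) * Real.exp (b * (Real.exp ν - 1)) ^ m :=
            mul_le_mul_of_nonneg_left (pow_le_pow_left₀ hsum0 hkey m) (Real.exp_nonneg _)
        _ = Real.exp (-((ν / a) * B) + (m:ℝ) * (b * (Real.exp ν - 1))) := by
            rw [← Real.exp_nat_mul, ← Real.exp_add]
        _ ≤ Real.exp (-s ^ 2 / 4) := by
            apply Real.exp_le_exp.2
            have hBexp : (ν / a) * B = ν * ((m:ℝ) * b) * R + ν / a := by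
              rw [hB_def]
              field_simp
            have hνa : 0 ≤ ν / a := le_of_lt (div_pos hν0 ha0)
            rw [hBexp]
            have := expoFinal (mb := (m:ℝ) * b) (M := (m:ℝ) * (b * (Real.exp ν - 1))) hνa hg (by ring)
            linarith [this]
        _ = E := by rw [hE_def]
      have hScompl : {x : Fin m → U | ∑ i : Fin n, v i * (kcount h x i : ℝ) ≤ B}ᶜ
          = {x : Fin m → U | B < ∑ j, W (x j)} := by
        ext x
        simp only [Set.mem_compl_iff, Set.mem_setOf_eq, not_le, hX x]
      rw [prCompl q hq1, hScompl]
      linarith [htail]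
  refine ⟨main, le_trans main (prMono q hq0 ?_)⟩
  intro x hx
  exact le_trans (hAST x) hx
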